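/- Let (R, m) be a local ring whose separated quotient R/⋂_{n≥1} mⁿ is Noetherian. Then for every ideal I of R, the m-adic closure of I equals I + ⋂_{n≥1} mⁿ; that is, ⋂_{n≥1} (I + mⁿ) = I + ⋂_{n≥1} mⁿ. -/

import Mathlib

/-- The ideal of infinitesimals of a local ring: the intersection of all powers
of the maximal ideal. -/
def infinitesimals (A : Type*) [CommRing A] [IsLocalRing A] : Ideal A :=
  ⨅ n : ℕ, IsLocalRing.maximalIdeal A ^ (n + 1)

/-- If the separated quotient of a local ring is Noetherian, then the `m`-adic
closure of any ideal `I` equals `I + Inf(R)`. -/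
theorem stmt_5 {R : Type*} [CommRing R] [IsLocalRing R]
    (hN : IsNoetherianRing (R ⧸ infinitesimals R)) (I : Ideal R) :
    (⨅ n : ℕ, I + IsLocalRing.maximalIdeal R ^ (n + 1)) = I + infinitesimals R := by
  by_cases hI : I = ⊤
  · simp [hI]
  have hm := IsLocalRing.maximalIdeal.isMaximal R
  have hIm : I ≤ IsLocalRing.maximalIdeal R := IsLocalRing.le_maximalIdeal hI
  have hinf_le : infinitesimals R ≤ IsLocalRing.maximalIdeal R := by
    simpa [infinitesimals] using iInf_le (fun n : ℕ => IsLocalRing.maximalIdeal R ^ (n + 1)) 0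
  set K : Ideal R := I + infinitesimals R with hK
  have hKm : K ≤ IsLocalRing.maximalIdeal R := sup_le hIm hinf_le
  have hKtop : K ≠ ⊤ := fun h => hm.ne_top (top_le_iff.mp (h ▸ hKm))
  have hnt : Nontrivial (R ⧸ K) := Ideal.Quotient.nontrivial_iff.mpr hKtop
  -- R ⧸ K is Noetherian, as a quotient of R ⧸ infinitesimals R
  have hNK : IsNoetherianRing (R ⧸ K) := by
    refine isNoetherianRing_of_surjective _ _
      (Ideal.Quotient.factor (S := infinitesimals R) (T := K) le_sup_right) ?_
    intro x
    obtain ⟨y, rfl⟩ := Ideal.Quotient.mk_surjective x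
    exact ⟨Ideal.Quotient.mk _ y, Ideal.Quotient.factor_mk _ y⟩
  have hloc : IsLocalRing (R ⧸ K) :=
    IsLocalRing.of_surjective' (Ideal.Quotient.mk K) Ideal.Quotient.mk_surjective
  set J : Ideal (R ⧸ K) := (IsLocalRing.maximalIdeal R).map (Ideal.Quotient.mk K) with hJ
  have hJtop : J ≠ ⊤ := by
    intro h
    have : Ideal.comap (Ideal.Quotient.mk K) J = ⊤ := by rw [h, Ideal.comap_top]
    rw [hJ, Ideal.comap_map_of_surjective _ Ideal.Quotient.mk_surjective,
      ← RingHom.ker_eq_comap_bot, Ideal.mk_ker] at this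
    exact hm.ne_top (top_le_iff.mp (this ▸ sup_le le_rfl hKm))
  have hKrull : (⨅ i : ℕ, J ^ i) = ⊥ := Ideal.iInf_pow_eq_bot_of_isLocalRing J hJtop
  refine le_antisymm ?_ ?_
  · intro x hx
    have hx0 : Ideal.Quotient.mk K x = 0 := by
      rw [← Ideal.mem_bot, ← hKrull, Ideal.mem_iInf]
      intro i
      cases i with
      | zero => simp
      | succ n =>
        have hxn : x ∈ I + IsLocalRing.maximalIdeal R ^ (n + 1) :=
          Ideal.mem_iInf.mp hx n
        obtain ⟨a, ha, b, hb, rfl⟩ := Submodule.mem_sup.mp hxn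
        have ha0 : Ideal.Quotient.mk K a = 0 :=
          Ideal.Quotient.eq_zero_iff_mem.mpr (le_sup_left (α := Ideal R) ha)
        have hb' : Ideal.Quotient.mk K b ∈ J ^ (n + 1) := by
          rw [hJ, ← Ideal.map_pow]
          exact Ideal.mem_map_of_mem _ hb
        rw [map_add, ha0, zero_add]
        exact hb'
    exact Ideal.Quotient.eq_zero_iff_mem.mp hx0
  · refine le_iInf fun n => ?_
    refine sup_le (le_sup_left) (le_trans ?_ le_sup_right)
    exact iInf_le (fun k : ℕ => IsLocalRing.maximalIdeal R ^ (k + 1)) n
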